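/- Let H be a complex Hilbert space and φ : H →L[ℂ] H a finite potent continuous linear operator with index at most 1 (IsCompl (LinearMap.range φ) (LinearMap.ker φ)). If ψ : H →L[ℂ] H satisfies the Penrose equations φ ∘ ψ ∘ φ = φ, ψ ∘ φ ∘ ψ = ψ, (φ ∘ ψ)† = φ ∘ ψ and (ψ ∘ φ)† = ψ ∘ φ (where † is the Hilbert adjoint), then ψ is finite potent and has index at most 1, i.e. there exists n with the range of ψ^n finite-dimensional and IsCompl (LinearMap.range ψ) (LinearMap.ker ψ). -/

import Mathlib

open scoped InnerProductSpace

theorem core_stmt1 {H : Type*} [NormedAddCommGroup H] [InnerProductSpace ℂ H]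
    [CompleteSpace H] (φ ψ : H →L[ℂ] H)
    (hfp : ∃ n : ℕ, FiniteDimensional ℂ (LinearMap.range ((φ ^ n : H →L[ℂ] H) : H →ₗ[ℂ] H)))
    (hidx : IsCompl (LinearMap.range (φ : H →ₗ[ℂ] H)) (LinearMap.ker (φ : H →ₗ[ℂ] H)))
    (h1 : φ ∘L ψ ∘L φ = φ)
    (h2 : ψ ∘L φ ∘L ψ = ψ)
    (h3 : ContinuousLinearMap.adjoint (φ ∘L ψ) = φ ∘L ψ)
    (h4 : ContinuousLinearMap.adjoint (ψ ∘L φ) = ψ ∘L φ) :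
    (∃ n : ℕ, FiniteDimensional ℂ (LinearMap.range ((ψ ^ n : H →L[ℂ] H) : H →ₗ[ℂ] H))) ∧
      IsCompl (LinearMap.range (ψ : H →ₗ[ℂ] H)) (LinearMap.ker (ψ : H →ₗ[ℂ] H)) := by
  classical
  have h1' : ∀ x, φ (ψ (φ x)) = φ x := fun x => by
    have := congrFun (congrArg DFunLike.coe h1) x
    simpa using this
  have h2' : ∀ x, ψ (φ (ψ x)) = ψ x := fun x => by
    have := congrFun (congrArg DFunLike.coe h2) x
    simpa using this
  have hq : ∀ a b : H, ⟪φ (ψ a), b⟫_ℂ = ⟪a, φ (ψ b)⟫_ℂ := by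
    intro a b
    have := ContinuousLinearMap.adjoint_inner_left (φ ∘L ψ) b a
    rw [h3] at this
    simpa using this
  have hp : ∀ a b : H, ⟪ψ (φ a), b⟫_ℂ = ⟪a, ψ (φ b)⟫_ℂ := by
    intro a b
    have := ContinuousLinearMap.adjoint_inner_left (ψ ∘L φ) b a
    rw [h4] at this
    simpa using this
  -- surjectivity of φ on its own range
  have hsurj : ∀ r ∈ LinearMap.range (φ : H →ₗ[ℂ] H), ∃ a ∈ LinearMap.range (φ : H →ₗ[ℂ] H), φ a = r := by
    rintro r ⟨z, rfl⟩
    have hz : z ∈ (⊤ : Submodule ℂ H) := trivial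
    rw [← hidx.sup_eq_top] at hz
    rcases Submodule.mem_sup.mp hz with ⟨a, ha, b, hb, hab⟩
    refine ⟨a, ha, ?_⟩
    have hb0 : φ b = 0 := LinearMap.mem_ker.mp hb
    rw [← hab, map_add, ContinuousLinearMap.coe_coe, hb0, add_zero]
  have hle : ∀ m : ℕ, LinearMap.range (φ : H →ₗ[ℂ] H) ≤ LinearMap.range ((φ ^ (m + 1) : H →L[ℂ] H) : H →ₗ[ℂ] H) := by
    intro m
    induction m with
    | zero => rw [pow_one]
    | succ m ih =>
      intro x hx
      obtain ⟨a, ha, hφa⟩ := hsurj x hx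
      obtain ⟨z, hz⟩ := ih ha
      refine ⟨z, ?_⟩
      rw [pow_succ']
      have : (φ * φ ^ (m + 1)) z = φ ((φ ^ (m + 1)) z) := rfl
      simp only [ContinuousLinearMap.coe_coe] at hz ⊢; rw [this, hz, hφa]
  -- range φ is finite dimensional
  haveI hVfd : FiniteDimensional ℂ (LinearMap.range (φ : H →ₗ[ℂ] H)) := by
    obtain ⟨n, hn⟩ := hfp
    rcases n with _ | m
    · have e : LinearMap.range ((φ ^ 0 : H →L[ℂ] H) : H →ₗ[ℂ] H) = ⊤ := by
        refine eq_top_iff.mpr fun x _ => ⟨x, ?_⟩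
        simp [pow_zero]
      rw [e] at hn
      haveI := hn
      haveI : FiniteDimensional ℂ H := Module.Finite.equiv (Submodule.topEquiv)
      infer_instance
    · exact Submodule.finiteDimensional_of_le (hle m)
  -- range ψ is finite dimensional
  haveI hψfd : FiniteDimensional ℂ (LinearMap.range (ψ : H →ₗ[ℂ] H)) := by
    have hle' : LinearMap.range (ψ : H →ₗ[ℂ] H) ≤
        Submodule.map (ψ : H →ₗ[ℂ] H) (LinearMap.range (φ : H →ₗ[ℂ] H)) := by
      rintro x ⟨y, rfl⟩
      exact ⟨φ (ψ y), ⟨ψ y, rfl⟩, h2' y⟩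
    haveI : FiniteDimensional ℂ
        (Submodule.map (ψ : H →ₗ[ℂ] H) (LinearMap.range (φ : H →ₗ[ℂ] H))) :=
      Module.Finite.map _ _
    exact Submodule.finiteDimensional_of_le hle'
  refine ⟨⟨1, by rw [pow_one]; exact hψfd⟩, ?_, ?_⟩
  · -- Disjoint
    rw [Submodule.disjoint_def]
    intro x hxr hxk
    obtain ⟨y, hy⟩ := hxr
    have hx0 : ψ x = 0 := LinearMap.mem_ker.mp hxk
    have hxp : ψ (φ x) = x := by
      calc ψ (φ x) = ψ (φ (ψ y)) := by simp only [← hy, ContinuousLinearMap.coe_coe]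
        _ = ψ y := h2' y
        _ = x := hy
    have hor : ∀ u, ⟪x, φ u⟫_ℂ = 0 := by
      intro u
      have h' : ⟪φ (ψ x), φ u⟫_ℂ = ⟪x, φ (ψ (φ u))⟫_ℂ := hq x (φ u)
      rw [hx0, map_zero, h1'] at h'
      simpa using h'.symm
    have hker : ∀ w, φ w = 0 → ⟪x, w⟫_ℂ = 0 := by
      intro w hw
      have h' : ⟪ψ (φ x), w⟫_ℂ = ⟪x, ψ (φ w)⟫_ℂ := hp x w
      rw [hxp, hw, map_zero] at h'
      simpa using h'
    have hx2 : x ∈ (⊤ : Submodule ℂ H) := trivial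
    rw [← hidx.sup_eq_top] at hx2
    rcases Submodule.mem_sup.mp hx2 with ⟨a, ha, b, hb, hab⟩
    obtain ⟨u, hu⟩ := ha
    have h1a : ⟪x, a⟫_ℂ = 0 := by
      have := hor u; simp only [ContinuousLinearMap.coe_coe] at hu; rwa [hu] at this
    have hxx : ⟪x, x⟫_ℂ = 0 := by
      have : ⟪x, x⟫_ℂ = ⟪x, a + b⟫_ℂ := by rw [hab]
      rw [this, inner_add_right, h1a, hker b (LinearMap.mem_ker.mp hb), add_zero]
    exact inner_self_eq_zero.mp hxx
  · -- Codisjoint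
    have hfdV : FiniteDimensional ℂ (LinearMap.range (φ : H →ₗ[ℂ] H)) := hVfd
    set f : H →ₗ[ℂ] H :=
      (φ : H →ₗ[ℂ] H) ∘ₗ (ψ : H →ₗ[ℂ] H) ∘ₗ (ψ : H →ₗ[ℂ] H) ∘ₗ (φ : H →ₗ[ℂ] H)
      with hf
    have hfmem : ∀ x ∈ LinearMap.range (φ : H →ₗ[ℂ] H), f x ∈ LinearMap.range (φ : H →ₗ[ℂ] H) :=
      fun x _ => ⟨ψ (ψ (φ x)), rfl⟩
    set T : LinearMap.range (φ : H →ₗ[ℂ] H) →ₗ[ℂ] LinearMap.range (φ : H →ₗ[ℂ] H) := f.restrict hfmem with hT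
    have Tinj : Function.Injective T := by
      rw [injective_iff_map_eq_zero]
      intro v hv
      have hv0 : φ (ψ (ψ (φ (v : H)))) = 0 := by
        have := congrArg Subtype.val hv
        simpa [hT, LinearMap.restrict_apply, hf] using this
      have haorth : ∀ u, ⟪ψ (φ (v : H)), φ u⟫_ℂ = 0 := by
        intro u
        have h' : ⟪φ (ψ (ψ (φ (v : H)))), φ u⟫_ℂ
            = ⟪ψ (φ (v : H)), φ (ψ (φ u))⟫_ℂ := hq (ψ (φ (v : H))) (φ u)
        rw [h1', hv0] at h'
        simpa using h'.symm
      have ha0 : ψ (φ (v : H)) = 0 := by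
        have h3' : ⟪ψ (φ (v : H)), ψ (φ (v : H))⟫_ℂ
            = ⟪(v : H), ψ (φ (ψ (φ (v : H))))⟫_ℂ := hp (v : H) (ψ (φ (v : H)))
        rw [h2' (φ (v : H))] at h3'
        obtain ⟨u, hu⟩ := v.2
        have hav : ⟪ψ (φ (v : H)), (v : H)⟫_ℂ = 0 := by
          have := haorth u; simp only [ContinuousLinearMap.coe_coe] at hu; rwa [hu] at this
        have hva : ⟪(v : H), ψ (φ (v : H))⟫_ℂ = 0 := by
          rw [← inner_conj_symm, hav, map_zero]
        rw [hva] at h3'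
        exact inner_self_eq_zero.mp h3'
      have hφv : φ (v : H) = 0 := by
        have := h1' (v : H)
        rw [ha0, map_zero] at this
        exact this.symm
      have hv0' : (v : H) = 0 :=
        Submodule.disjoint_def.mp hidx.disjoint (v : H) v.2
          (LinearMap.mem_ker.mpr hφv)
      exact Subtype.ext hv0'
    have Tsurj : Function.Surjective T := LinearMap.injective_iff_surjective.mp Tinj
    have key : ∀ r ∈ LinearMap.range (φ : H →ₗ[ℂ] H),
        r ∈ LinearMap.range (ψ : H →ₗ[ℂ] H) ⊔ LinearMap.ker (ψ : H →ₗ[ℂ] H) := by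
      intro r hr
      obtain ⟨v, hv⟩ := Tsurj ⟨r, hr⟩
      have hv' : φ (ψ (ψ (φ (v : H)))) = r := by
        have := congrArg Subtype.val hv
        simpa [hT, LinearMap.restrict_apply, hf] using this
      refine Submodule.mem_sup.mpr
        ⟨ψ (φ (v : H)), ⟨φ (v : H), rfl⟩, r - ψ (φ (v : H)), ?_, by abel⟩
      refine LinearMap.mem_ker.mpr ?_
      have hψr : ψ r = ψ (ψ (φ (v : H))) := by
        rw [← hv']
        exact h2' (ψ (φ (v : H)))
      rw [map_sub, ContinuousLinearMap.coe_coe, hψr, sub_self]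
    rw [codisjoint_iff_le_sup]
    intro x _
    have hk : x - φ (ψ x) ∈ LinearMap.ker (ψ : H →ₗ[ℂ] H) := by
      refine LinearMap.mem_ker.mpr ?_
      rw [map_sub, ContinuousLinearMap.coe_coe, h2', sub_self]
    have hr : φ (ψ x) ∈ LinearMap.range (ψ : H →ₗ[ℂ] H) ⊔ LinearMap.ker (ψ : H →ₗ[ℂ] H) :=
      key _ ⟨ψ x, rfl⟩
    have := Submodule.add_mem _ hr (Submodule.mem_sup_right hk)
    simpa using this
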